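/- arXiv:1902.11025 — 3 statements merged into one kernel-verified Lean document; each statement's English description precedes it below -/
import Mathlib

section
/- Let the support of ω be partitioned into W disjoint measurable subregions Ω₁,…,Ω_W with probabilities p_k = Pr{ω ∈ Ω_k} and conditional means E[ω|Ω_k]. Then for every real x, the complementary first-order loss function satisfies L̂(x,ω) ≥ max over i ∈ {0,1,…,W} of ( x·Σ_{k≤i} p_k − Σ_{k≤i} p_k E[ω|Ω_k] ); that is, the piecewise linear function with W+1 segments given by these maxima is a lower bound on L̂. -/
open MeasureTheory

/-- Jensen's piecewise lower bound (Lemma 1): if the support of `X` is partitioned into `W`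
disjoint measurable subregions `A 0, …, A (W-1)` with probabilities `p k` and conditional means
`m k`, then for every real `x` and every `i ∈ {0,…,W}`, the complementary first-order loss
function satisfies `L̂(x,X) ≥ x·Σ_{k<i} p k − Σ_{k<i} p k * m k`; hence the piecewise linear
function given by the maximum of these `W+1` affine segments is a lower bound on `L̂`. -/
theorem complLoss_jensen_lower_bound {Ω : Type*} [MeasurableSpace Ω] (μ : Measure Ω)
    [IsProbabilityMeasure μ] (X : Ω → ℝ) (hX : Integrable X μ)
    (W : ℕ) (A : ℕ → Set Ω)
    (hmeas : ∀ k < W, MeasurableSet (A k))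
    (hdisj : ∀ k < W, ∀ l < W, k ≠ l → Disjoint (A k) (A l))
    (hcover : μ (⋃ k ∈ Finset.range W, A k) = 1)
    (p : ℕ → ℝ) (hp : ∀ k < W, p k = (μ (A k)).toReal)
    (hppos : ∀ k < W, 0 < p k)
    (m : ℕ → ℝ) (hm : ∀ k < W, m k = (∫ ω in A k, X ω ∂μ) / p k)
    (x : ℝ) (i : ℕ) (hi : i ≤ W) :
    x * (∑ k ∈ Finset.range i, p k) - ∑ k ∈ Finset.range i, p k * m k
      ≤ ∫ ω, max (x - X ω) 0 ∂μ := by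
  have hg : Integrable (fun ω => max (x - X ω) 0) μ :=
    ((integrable_const x).sub hX).pos_part
  have hsub : Integrable (fun ω => x - X ω) μ := (integrable_const x).sub hX
  calc x * (∑ k ∈ Finset.range i, p k) - ∑ k ∈ Finset.range i, p k * m k
      = ∑ k ∈ Finset.range i, (x * p k - p k * m k) := by
        rw [Finset.mul_sum, ← Finset.sum_sub_distrib]
    _ = ∑ k ∈ Finset.range i, ∫ ω in A k, (x - X ω) ∂μ := by
        refine Finset.sum_congr rfl (fun k hk => ?_)
        have hkW : k < W := lt_of_lt_of_le (Finset.mem_range.mp hk) hi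
        have hpk : p k ≠ 0 := (hppos k hkW).ne'
        rw [integral_sub (integrableOn_const (C := x)
              (hs := (measure_lt_top μ (A k)).ne)) hX.integrableOn,
            setIntegral_const, measureReal_def, hm k hkW, mul_div_cancel₀ _ hpk, hp k hkW,
            smul_eq_mul, mul_comm]
    _ ≤ ∑ k ∈ Finset.range i, ∫ ω in A k, max (x - X ω) 0 ∂μ := by
        refine Finset.sum_le_sum (fun k _ => ?_)
        exact setIntegral_mono hsub.integrableOn hg.integrableOn
          (fun ω => le_max_left _ _)
    _ = ∫ ω in ⋃ k ∈ Finset.range i, A k, max (x - X ω) 0 ∂μ := by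
        refine (integral_biUnion_finset _ (fun k hk => hmeas k
          (lt_of_lt_of_le (Finset.mem_range.mp hk) hi)) ?_
          (fun k _ => hg.integrableOn)).symm
        intro k hk l hl hkl
        exact hdisj k (lt_of_lt_of_le (Finset.mem_range.mp hk) hi) l
          (lt_of_lt_of_le (Finset.mem_range.mp hl) hi) hkl
    _ ≤ ∫ ω, max (x - X ω) 0 ∂μ :=
        setIntegral_le_integral hg (Filter.Eventually.of_forall
          (fun ω => le_max_right _ _))
end

section
/- With the same partition as above, for every real x the first-order loss function satisfies L(x,ω) ≥ x·Σ_{k≤i} p_k − Σ_{k≤i} p_k E[ω|Ω_k] + (E[ω] − x) for each i ∈ {0,…,W}; in particular L(x,ω) ≥ L̂_lb(x,ω) − x + E[ω] where L̂_lb is the piecewise-linear Jensen lower bound of the complementary loss function. -/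
open MeasureTheory

/-- Jensen's piecewise lower bound for the first-order loss function: with the partition as in
Lemma 1, for every real `x` and every `i ∈ {0,…,W}`,
`L(x,X) ≥ x·Σ_{k<i} p k − Σ_{k<i} p k * m k + (E[X] − x)`; in particular
`L(x,X) ≥ L̂_lb(x,X) − x + E[X]`. -/
theorem loss_jensen_lower_bound {Ω : Type*} [MeasurableSpace Ω] (μ : Measure Ω)
    [IsProbabilityMeasure μ] (X : Ω → ℝ) (hX : Integrable X μ)
    (W : ℕ) (A : ℕ → Set Ω)
    (hmeas : ∀ k < W, MeasurableSet (A k))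
    (hdisj : ∀ k < W, ∀ l < W, k ≠ l → Disjoint (A k) (A l))
    (hcover : μ (⋃ k ∈ Finset.range W, A k) = 1)
    (p : ℕ → ℝ) (hp : ∀ k < W, p k = (μ (A k)).toReal)
    (hppos : ∀ k < W, 0 < p k)
    (m : ℕ → ℝ) (hm : ∀ k < W, m k = (∫ ω in A k, X ω ∂μ) / p k)
    (x : ℝ) (i : ℕ) (hi : i ≤ W) :
    x * (∑ k ∈ Finset.range i, p k) - (∑ k ∈ Finset.range i, p k * m k)
        + ((∫ ω, X ω ∂μ) - x)
      ≤ ∫ ω, max (X ω - x) 0 ∂μ := by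
  classical
  set B : Set Ω := ⋃ k ∈ Finset.range i, A k with hB
  have hlt : ∀ k ∈ Finset.range i, k < W := fun k hk =>
    lt_of_lt_of_le (Finset.mem_range.mp hk) hi
  have hmB : MeasurableSet B :=
    Finset.measurableSet_biUnion _ (fun k hk => hmeas k (hlt k hk))
  have hdisj' : (↑(Finset.range i) : Set ℕ).Pairwise (Function.onFun Disjoint A) := by
    intro k hk l hl hkl
    exact hdisj k (hlt k (by simpa using hk)) l (hlt l (by simpa using hl)) hkl
  have hsum_p : (∑ k ∈ Finset.range i, p k) = (μ B).toReal := by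
    rw [hB, measure_biUnion_finset hdisj' (fun k hk => hmeas k (hlt k hk)),
      ENNReal.toReal_sum (fun k hk => measure_ne_top μ _)]
    exact Finset.sum_congr rfl fun k hk => hp k (hlt k hk)
  have hsum_int : (∑ k ∈ Finset.range i, p k * m k) = ∫ ω in B, X ω ∂μ := by
    rw [hB, integral_biUnion_finset _ (fun k hk => hmeas k (hlt k hk)) hdisj'
      (fun k hk => hX.integrableOn)]
    refine Finset.sum_congr rfl fun k hk => ?_
    rw [hm k (hlt k hk), mul_div_cancel₀ _ (ne_of_gt (hppos k (hlt k hk)))]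
  have hsplit : ∫ ω, X ω ∂μ = (∫ ω in B, X ω ∂μ) + ∫ ω in Bᶜ, X ω ∂μ :=
    (integral_add_compl hmB hX).symm
  have hmuc : (μ Bᶜ).toReal = 1 - (μ B).toReal := by
    rw [measure_compl hmB (measure_ne_top μ B), measure_univ,
      ENNReal.toReal_sub_of_le prob_le_one (by simp)]
    simp
  have hconst : ∫ _ω in Bᶜ, x ∂μ = (μ Bᶜ).toReal * x := by
    rw [setIntegral_const, smul_eq_mul]
    rfl
  have hsub : ∫ ω in Bᶜ, (X ω - x) ∂μ = (∫ ω in Bᶜ, X ω ∂μ) - (μ Bᶜ).toReal * x := by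
    rw [integral_sub hX.integrableOn (integrableOn_const (measure_ne_top μ _)),
      hconst]
  have hmax_int : Integrable (fun ω => max (X ω - x) 0) μ :=
    (hX.sub (integrable_const x)).pos_part
  have h3 : ∫ ω in Bᶜ, (X ω - x) ∂μ ≤ ∫ ω in Bᶜ, max (X ω - x) 0 ∂μ :=
    integral_mono (hX.sub (integrable_const x)).integrableOn hmax_int.integrableOn
      (fun ω => le_max_left _ _)
  have h4 : ∫ ω in Bᶜ, max (X ω - x) 0 ∂μ ≤ ∫ ω, max (X ω - x) 0 ∂μ :=
    setIntegral_le_integral hmax_int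
      (Filter.Eventually.of_forall fun ω => le_max_right _ _)
  have : x * (∑ k ∈ Finset.range i, p k) - (∑ k ∈ Finset.range i, p k * m k)
      + ((∫ ω, X ω ∂μ) - x) = ∫ ω in Bᶜ, (X ω - x) ∂μ := by
    rw [hsum_p, hsum_int, hsplit, hsub, hmuc]; ring
  linarith
end

section
/- If G: ℝ → ℝ is continuous, K-convex, and coercive with global minimizer S, then the set {x ≤ S : G(x) > G(S) + K} is an interval of the form (−∞, s) ∩ (−∞, S] for some s ≤ S; i.e., if G(x) ≤ G(S) + K and x ≤ y ≤ S then G(y) ≤ G(S) + K. -/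
/-- `G : ℝ → ℝ` is `K`-convex if for all `x ≤ z` and `a ∈ [0,1]`,
`G(a x + (1−a) z) ≤ a G(x) + (1−a)(G(z) + K·δ(z−x))`, where `δ(0) = 0` and `δ(u) = 1`
for `u > 0`. -/
def KConvexOn (K : ℝ) (G : ℝ → ℝ) : Prop :=
  ∀ x z : ℝ, x ≤ z → ∀ a : ℝ, 0 ≤ a → a ≤ 1 →
    G (a * x + (1 - a) * z) ≤ a * G x + (1 - a) * (G z + K * (if x < z then 1 else 0))

/-- If `G : ℝ → ℝ` is continuous, `K`-convex, and coercive with global minimizer `S`, then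
the set `{x ≤ S : G(x) > G(S) + K}` is a lower interval: if `G(x) ≤ G(S) + K` and
`x ≤ y ≤ S` then `G(y) ≤ G(S) + K`. -/
theorem kConvex_threshold_interval (K : ℝ) (hK : 0 ≤ K) (G : ℝ → ℝ)
    (hcont : Continuous G) (hkc : KConvexOn K G)
    (hcoer : Filter.Tendsto G (Filter.cocompact ℝ) Filter.atTop)
    (S : ℝ) (hS : ∀ x, G S ≤ G x) :
    ∀ x y : ℝ, G x ≤ G S + K → x ≤ y → y ≤ S → G y ≤ G S + K := by
  intro x y hx hxy hyS
  rcases eq_or_lt_of_le (hxy.trans hyS) with hxS | hxS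
  · -- x = S, so y = S
    have : y = S := le_antisymm hyS (hxS ▸ hxy)
    subst this
    linarith [hS x]
  · set a : ℝ := (S - y) / (S - x) with ha
    have hSx : (0:ℝ) < S - x := by linarith
    have ha0 : 0 ≤ a := div_nonneg (by linarith) hSx.le
    have ha1 : a ≤ 1 := by
      rw [div_le_one hSx]; linarith
    have hy : a * x + (1 - a) * S = y := by
      field_simp [ha]
      have hmul : a * (S - x) = S - y := by rw [ha]; exact div_mul_cancel₀ _ hSx.ne'
      linear_combination (-1 : ℝ) * hmul
    have := hkc x S (by linarith) a ha0 ha1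
    rw [hy, if_pos hxS] at this
    nlinarith [hS x]
end
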